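/- arXiv:2307.04335 — 4 statements merged into one kernel-verified Lean document; each statement's English description precedes it below -/
import Mathlib

section
/- If T is a common supersequence of a set S of strings over alphabet X, and Y is a string over a disjoint alphabet, then T·Y·X is a common supersequence of the set {a·b·Y·X_{-ab} : ab ∈ S}, where X denotes the concatenation x_1...x_n of all letters of X and X_{-ab} denotes X with the letters a and b removed. -/
/-- If `T` is a common supersequence of a set `S` of two-letter strings
over alphabet `X`, and `Y` is a string over a disjoint alphabet, then `T ++ Y ++ X`
is a common supersequence of `{a·b·Y·X₋ₐᵦ : ab ∈ S}`. -/
theorem stmt_0 {α : Type*} [DecidableEq α]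
    (X Y T : List α) (S : Set (List α))
    (hS : ∀ s ∈ S, ∃ a b : α, s = [a, b] ∧ a ≠ b ∧ a ∈ X ∧ b ∈ X)
    (hdisj : ∀ y ∈ Y, y ∉ X)
    (hT : ∀ s ∈ S, s.Sublist T) :
    ∀ a b : α, [a, b] ∈ S →
      (([a, b] ++ Y) ++ X.filter (fun x => x ≠ a ∧ x ≠ b)).Sublist ((T ++ Y) ++ X) := by
  intro a b hab
  exact ((hT _ hab).append (List.Sublist.refl Y)).append (List.filter_sublist (l := X))
end

section
/- Let S be a set of length-2 strings ab (a ≠ b) over alphabet X of size n, and let S_{ab} = a·b·Y·X_{-ab} with Y a string of N = n+k+1 new distinct separators. If T' is a common supersequence of all S_{ab} with |T'| ≤ k+N+n, and T' = P·R where R is the shortest suffix of T' containing Y as a subsequence, then |P| < N, and hence for every ab ∈ S, the string ab is a subsequence of P and X_{-ab} is a subsequence of R. -/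
private lemma sublist_tail_of_cons_sublist {α : Type*} {b : α} {L R : List α}
    (h : (b :: L).Sublist R) : L.Sublist R.tail := by
  induction R with
  | nil => simp at h
  | cons r R ih =>
    cases h with
    | cons a h' => exact (L.sublist_cons_self b).trans h'
    | cons_cons a h' => exact h'

/-- if `T'` is a common supersequence of all `S_{ab} = a·b·Y·X₋ₐᵦ` with
`|T'| ≤ k + N + n` and `T' = P ++ R` where `R` is the shortest suffix of `T'` containing
`Y` as a subsequence, then `|P| < N`, and for every `ab ∈ S` the string `ab` is a
subsequence of `P` and `X₋ₐᵦ` is a subsequence of `R`. -/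
theorem stmt_2 {α : Type*} [DecidableEq α] (n k : ℕ)
    (X Y : List α) (hXnd : X.Nodup) (hXlen : X.length = n)
    (hYnd : Y.Nodup) (hYlen : Y.length = n + k + 1)
    (hdisj : ∀ y ∈ Y, y ∉ X)
    (S : Set (α × α))
    (hS : ∀ p ∈ S, p.1 ∈ X ∧ p.2 ∈ X ∧ p.1 ≠ p.2)
    (T' P R : List α)
    (hT' : ∀ p ∈ S,
      (([p.1, p.2] ++ Y) ++ X.filter (fun x => x ≠ p.1 ∧ x ≠ p.2)).Sublist T')
    (hlen : T'.length ≤ k + (n + k + 1) + n)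
    (hPR : T' = P ++ R)
    (hYR : Y.Sublist R)
    (hmin : ∀ R' : List α, R' <:+ T' → Y.Sublist R' → R.length ≤ R'.length) :
    P.length < n + k + 1 ∧
      ∀ p ∈ S, [p.1, p.2].Sublist P ∧
        (X.filter (fun x => x ≠ p.1 ∧ x ≠ p.2)).Sublist R := by
  have hRT : R <:+ T' := hPR ▸ List.suffix_append P R
  have hYle := hYR.length_le
  have hTlen : T'.length = P.length + R.length := by
    rw [hPR, List.length_append]
  have hPlt : P.length < n + k + 1 := by omega
  refine ⟨hPlt, ?_⟩
  intro p hp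
  set Z := X.filter (fun x => x ≠ p.1 ∧ x ≠ p.2) with hZ
  have h : (([p.1, p.2] ++ Y) ++ Z).Sublist (P ++ R) := hPR ▸ hT' p hp
  obtain ⟨l₁, l₂, heq, h1, h2⟩ := List.sublist_append_iff.mp h
  set m := l₁.length with hm
  have hmlt : m < n + k + 1 := lt_of_le_of_lt h1.length_le hPlt
  have hl₂ : l₂ = (([p.1, p.2] ++ Y) ++ Z).drop m := by
    rw [heq, hm, List.drop_left]
  have hmle : m ≤ ([p.1, p.2] ++ Y).length := by
    simp [hYlen]; omega
  have hdrop : (([p.1, p.2] ++ Y) ++ Z).drop m = ([p.1, p.2] ++ Y).drop m ++ Z := by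
    exact List.drop_append_of_le_length hmle
  by_cases h2le : 2 ≤ m
  · -- [a,b] is a prefix of l₁, and Z is a suffix of l₂
    have hl₁ : l₁ = (([p.1, p.2] ++ Y) ++ Z).take m := by
      rw [heq, hm, List.take_left]
    have hab : [p.1, p.2] <+: l₁ := by
      rw [hl₁]
      have h0 : (([p.1, p.2] ++ Y) ++ Z).take 2 = [p.1, p.2] := by simp
      have := List.take_isPrefix_take (l := ([p.1, p.2] ++ Y) ++ Z) (m := 2) (n := m)
        |>.mpr (Or.inl h2le)
      rwa [h0] at this
    have habP : [p.1, p.2].Sublist P := (hab.sublist).trans h1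
    have hZR : Z.Sublist R := by
      have : Z <:+ l₂ := by
        rw [hl₂, hdrop]; exact List.suffix_append _ Z
      exact this.sublist.trans h2
    exact ⟨habP, hZR⟩
  · -- contradiction: Y would fit in R.tail
    exfalso
    have hbY : (p.2 :: Y).Sublist l₂ := by
      rw [hl₂, hdrop]
      have h1' : (p.2 :: Y).Sublist (([p.1, p.2] ++ Y).drop m) := by
        interval_cases m
        · exact (p.2 :: Y).sublist_cons_self p.1
        · simp
      exact h1'.trans (List.sublist_append_left _ Z)
    have hYt : Y.Sublist R.tail := sublist_tail_of_cons_sublist (hbY.trans h2)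
    have := hmin R.tail ((R.tail_suffix).trans hRT) hYt
    have htl : R.tail.length = R.length - 1 := R.length_tail
    omega
end

section
/- Under the lineage-taxon-string labeling of a line tree T(P) for permutation P = p_1...p_n, with an ordering π on Σ ∪ {ℓ} in which ℓ is the smallest element, the LTS of ℓ is exactly P and the LTS of every other taxon is empty. -/
/-- The label, under the ordering given by the linear order on `α`, of the internal
node `vᵢ` of the line tree `T(P)` (with extra bottom leaf `ℓ`): it is the larger of the
minimum taxon below each of its two children, i.e. `max pᵢ (min{pᵢ₊₁, …, p_n, ℓ})`. -/
def lineLabel {α : Type} [LinearOrder α] (P : List α) (ℓ : α) (i : Fin P.length) : α :=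
  max (P.get i) ((P.drop ((i : ℕ) + 1)).foldr min ℓ)

/-- The lineage taxon string (LTS) of the taxon `f` in the line tree `T(P)` under the
ordering given by the linear order on `α`: the string of labels of the internal nodes
on the path from the unique internal node labelled `f` down to the leaf `f`, excluding
the starting node's label.  The root is labelled with the overall smallest taxon
`min{p₁, …, p_n, ℓ}`, and `vᵢ` is labelled `lineLabel P ℓ i`. -/
def lineLTS {α : Type} [LinearOrder α] (P : List α) (ℓ : α) (f : α) : List α :=
  let labels := List.ofFn (lineLabel P ℓ)
  let endIdx : ℕ := if f = ℓ then P.length else P.idxOf f + 1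
  if f = P.foldr min ℓ then labels.take endIdx
  else
    match (List.finRange P.length).find? (fun i => decide (lineLabel P ℓ i = f)) with
    | some i => (labels.take endIdx).drop ((i : ℕ) + 1)
    | none => []

lemma foldr_min_eq_of_le {α : Type} [LinearOrder α] (ℓ : α) :
    ∀ L : List α, (∀ a ∈ L, ℓ ≤ a) → L.foldr min ℓ = ℓ := by
  intro L h
  induction L with
  | nil => rfl
  | cons a t ih =>
    simp only [List.foldr_cons, ih (fun b hb => h b (List.mem_cons_of_mem _ hb))]
    exact min_eq_right (h a (List.mem_cons_self))

/-- in the line tree `T(P)` for the permutation `P` of `Σ`, under an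
ordering in which `ℓ` is the smallest element, the lineage taxon string of `ℓ` is
exactly `P`, and the LTS of every other taxon is empty. -/
theorem stmt_10 {α : Type} [LinearOrder α] (P : List α) (ℓ : α)
    (hnd : P.Nodup) (hnotin : ℓ ∉ P) (hsmall : ∀ a ∈ P, ℓ < a) :
    lineLTS P ℓ ℓ = P ∧ ∀ f ∈ P, lineLTS P ℓ f = [] := by
  have hle : ∀ a ∈ P, ℓ ≤ a := fun a ha => (hsmall a ha).le
  have hlab : ∀ i, lineLabel P ℓ i = P.get i := by
    intro i
    unfold lineLabel
    rw [foldr_min_eq_of_le ℓ _ (fun a ha => hle a (List.mem_of_mem_drop ha))]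
    exact max_eq_left (hle _ (P.get_mem _))
  have hlabels : List.ofFn (lineLabel P ℓ) = P := by
    rw [show lineLabel P ℓ = P.get from funext hlab, List.ofFn_get]
  have hfold : P.foldr min ℓ = ℓ := foldr_min_eq_of_le ℓ P hle
  constructor
  · unfold lineLTS
    simp [hfold, hlabels]
  · intro f hf
    have hne : f ≠ ℓ := (hsmall f hf).ne'
    unfold lineLTS
    simp only [hfold, hlabels, if_neg hne]
    cases hfind : (List.finRange P.length).find? (fun i => decide (lineLabel P ℓ i = f)) with
    | none => simp
    | some i =>
      simp only
      have hgi : P.get i = f := by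
        have := List.find?_some hfind
        simpa [hlab i] using this
      have hidx : P.idxOf f < P.length := List.idxOf_lt_length_iff.2 hf
      have : (⟨P.idxOf f, hidx⟩ : Fin P.length) = i := by
        rw [← List.Nodup.get_inj_iff hnd]
        rw [hgi, List.idxOf_get]
      have hle' : P.idxOf f + 1 ≤ (i : ℕ) + 1 := by
        have : P.idxOf f = (i : ℕ) := by rw [← this]
        omega
      apply List.drop_eq_nil_of_le
      calc (P.take (P.idxOf f + 1)).length ≤ P.idxOf f + 1 := by
            simpa using List.length_take_le _ _
        _ ≤ (i : ℕ) + 1 := hle'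
end

section
/- Let P be a permutation of Σ, ℓ ∉ Σ, and π an ordering of Σ ∪ {ℓ} with ℓ not the smallest element. Define β_1 to be the π-smallest element, and recursively β_{j+1} = min_π{p_{x+1},...,p_n, ℓ} whenever β_j = p_x with β_j < min_π{p_n, ℓ}; let β_1,...,β_w be the resulting sequence ending at min_π{p_n, ℓ}. If S_j denotes the LTS of β_j in T(P) under π, then P equals the concatenation S_1[1..|S_1|−1]·β_1·S_2[1..|S_2|−1]·β_2·...·S_{w−1}[1..|S_{w−1}|−1]·β_{w−1}·S'_w, where S'_w = S_w if β_w = ℓ and S'_w = S_w[1..|S_w|−1]·β_w otherwise. -/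
set_option linter.unusedSectionVars false

/-- The chain `β₁, β₂, …, β_w`: starting from `β₁` (the overall smallest taxon),
while `β_j = p_x < min{p_n, ℓ}` set `β_{j+1} = min{p_{x+1}, …, p_n, ℓ}`;
the chain ends at `min{p_n, ℓ}`.  The first argument is a fuel parameter. -/
def betaChain {α : Type} [LinearOrder α] (P : List α) (ℓ : α) : ℕ → α → List α
  | 0, b => [b]
  | fuel + 1, b =>
      if b < min (P.getLastD ℓ) ℓ then
        b :: betaChain P ℓ fuel ((P.drop (P.idxOf b + 1)).foldr min ℓ)
      else [b]


namespace Stmt11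
variable {α : Type} [LinearOrder α]

lemma foldr_min_le_init (L : List α) (ℓ : α) : L.foldr min ℓ ≤ ℓ := by
  induction L with
  | nil => simp
  | cons a L ih => exact le_trans (min_le_right _ _) ih

lemma foldr_min_le_mem {L : List α} {ℓ a : α} (h : a ∈ L) : L.foldr min ℓ ≤ a := by
  induction L with
  | nil => simp at h
  | cons b L ih =>
    rcases List.mem_cons.1 h with h | h
    · subst h; exact min_le_left _ _
    · exact le_trans (min_le_right _ _) (ih h)

lemma le_foldr_min {L : List α} {ℓ c : α} (h : ∀ a ∈ L, c ≤ a) (hc : c ≤ ℓ) :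
    c ≤ L.foldr min ℓ := by
  induction L with
  | nil => exact hc
  | cons b L ih =>
    exact le_min (h b (by simp)) (ih fun a ha => h a (by simp [ha]))

lemma foldr_min_mem (L : List α) (ℓ : α) : L.foldr min ℓ = ℓ ∨ L.foldr min ℓ ∈ L := by
  induction L with
  | nil => left; rfl
  | cons b L ih =>
    rcases le_total b (L.foldr min ℓ) with h | h
    · right; simp [min_eq_left h]
    · rcases ih with h' | h'
      · left; simpa [min_eq_right h] using h'
      · right; rw [List.foldr_cons, min_eq_right h]; exact List.mem_cons_of_mem _ h'

lemma find?_eq_some_getElem {β : Type*} {Q : List β} {p : β → Bool} {j : ℕ}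
    (hj : j < Q.length) (hpj : p Q[j] = true)
    (hlt : ∀ i (hi : i < j), p (Q[i]'(lt_trans hi hj)) = false) :
    Q.find? p = some Q[j] := by
  induction Q generalizing j with
  | nil => simp at hj
  | cons a Q ih =>
    cases j with
    | zero =>
        have : p a = true := by simpa using hpj
        simp [List.find?_cons, this]
    | succ j =>
      have h0 : p a = false := hlt 0 (Nat.succ_pos j)
      rw [List.find?_cons, h0]
      exact ih (by simpa using hj) hpj (fun i hi => hlt (i+1) (by omega))

lemma find?_finRange_eq_some {n : ℕ} {p : Fin n → Bool} {j : ℕ} (hj : j < n)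
    (h1 : p ⟨j, hj⟩ = true) (h2 : ∀ i (hi : i < j), p ⟨i, lt_trans hi hj⟩ = false) :
    (List.finRange n).find? p = some ⟨j, hj⟩ := by
  have hj' : j < (List.finRange n).length := by rw [List.length_finRange]; exact hj
  have hg : (List.finRange n)[j] = ⟨j, hj⟩ := by
    rw [List.getElem_finRange]; rfl
  have key := find?_eq_some_getElem (Q := List.finRange n) (p := p) hj'
  rw [hg] at key
  apply key h1
  intro i hi
  have hgi : (List.finRange n)[i]'(lt_trans hi hj') = ⟨i, lt_trans hi hj⟩ := by
    rw [List.getElem_finRange]; rfl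
  rw [hgi]
  exact h2 i hi

lemma find?_finRange_some {n : ℕ} {p : Fin n → Bool} {j : Fin n}
    (h : (List.finRange n).find? p = some j) :
    p j = true ∧ ∀ i : Fin n, i < j → p i = false := by
  rw [List.find?_eq_some_iff_append] at h
  obtain ⟨hpj, as, bs, heq, hall⟩ := h
  have hlen : as.length < (List.finRange n).length := by
    rw [heq]; simp
  have hjval : (j : ℕ) = as.length := by
    have h1 : (List.finRange n)[as.length] = (as ++ j :: bs)[as.length]'(by rw [← heq]; exact hlen) :=
      List.getElem_of_eq heq hlen
    rw [List.getElem_append_right (le_refl as.length), List.getElem_finRange] at h1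
    simp at h1
    have := congrArg (Fin.val) h1
    simpa using this.symm
  refine ⟨hpj, fun i hi => ?_⟩
  have hiv : (i : ℕ) < as.length := by rw [← hjval]; exact hi
  have h1 : (List.finRange n)[(i:ℕ)]'(lt_trans hiv hlen) = (as ++ j :: bs)[(i:ℕ)]'(by rw [← heq]; exact lt_trans hiv hlen) :=
    List.getElem_of_eq heq _
  rw [List.getElem_append_left hiv, List.getElem_finRange] at h1
  have h2 : i ∈ as := by
    rw [show i = as[(i:ℕ)] from by rw [← h1]; rfl]
    exact List.getElem_mem _
  have := hall i h2
  simpa using this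

end Stmt11

namespace Stmt11
variable {α : Type} [LinearOrder α]

lemma getElem_take_ne {P : List α} (hnd : P.Nodup) {k i : ℕ} {b : α}
    (hb : b ∈ P.drop k) (hi : i < k) (hi' : i < P.length) : P[i] ≠ b := by
  intro h
  have hmem : b ∈ P.take k := by
    rw [← h]
    have hik : i < (P.take k).length := by
      rw [List.length_take]; exact lt_min hi hi'
    rw [show P[i] = (P.take k)[i] from List.getElem_take.symm]
    exact List.getElem_mem _
  exact List.disjoint_take_drop hnd (le_refl k) hmem hb

lemma indexOf_drop {P : List α} (hnd : P.Nodup) {k : ℕ} {b : α}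
    (hb : b ∈ P.drop k) : P.idxOf b = k + (P.drop k).idxOf b := by
  have hkl : k ≤ P.length := by
    by_contra h
    push_neg at h
    rw [List.drop_eq_nil_of_le (le_of_lt h)] at hb
    simp at hb
  have hnot : b ∉ P.take k := fun h => List.disjoint_take_drop hnd (le_refl k) h hb
  conv_lhs => rw [← List.take_append_drop k P]
  rw [List.idxOf_append_of_notMem hnot, List.length_take, min_eq_left hkl]

lemma drop_indexOf_eq {P : List α} (hnd : P.Nodup) {k : ℕ} {b : α}
    (hb : b ∈ P.drop k) :
    P.drop (P.idxOf b + 1) = (P.drop k).drop ((P.drop k).idxOf b + 1) := by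
  rw [List.drop_drop, indexOf_drop hnd hb]
  ring_nf

section Setup
variable (P : List α) (ℓ : α)

lemma mem_drop_of_indexOf_ge {b : α} (hb : b ∈ P) {k : ℕ} (hk : k ≤ P.idxOf b) :
    b ∈ P.drop k := by
  have hlt : P.idxOf b < P.length := List.idxOf_lt_length_iff.2 hb
  have h1 : (P.drop k)[P.idxOf b - k]'(by rw [List.length_drop]; omega) = P[k + (P.idxOf b - k)] :=
    List.getElem_drop
  have h2 : (P.drop k)[P.idxOf b - k]'(by rw [List.length_drop]; omega) = b := by
    rw [h1]
    have he : k + (P.idxOf b - k) = P.idxOf b := by omega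
    simp only [he]
    exact List.getElem_idxOf hlt
  rw [← h2]
  exact List.getElem_mem _

lemma foldr_min_drop (hℓ : P.foldr min ℓ ≠ ℓ) {k : ℕ}
    (hk : k ≤ P.idxOf (P.foldr min ℓ)) :
    (P.drop k).foldr min ℓ = P.foldr min ℓ := by
  have hmem : P.foldr min ℓ ∈ P := (foldr_min_mem P ℓ).resolve_left hℓ
  have h1 : (P.drop k).foldr min ℓ ≤ P.foldr min ℓ :=
    foldr_min_le_mem (mem_drop_of_indexOf_ge P hmem hk)
  have h2 : P.foldr min ℓ ≤ (P.drop k).foldr min ℓ :=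
    le_foldr_min (fun a ha => foldr_min_le_mem (List.mem_of_mem_drop ha))
      (foldr_min_le_init P ℓ)
  exact le_antisymm h1 h2

lemma label_of_lt (hℓ : P.foldr min ℓ ≠ ℓ) (i : Fin P.length)
    (hi : (i : ℕ) < P.idxOf (P.foldr min ℓ)) :
    lineLabel P ℓ i = P.get i := by
  unfold lineLabel
  rw [foldr_min_drop P ℓ hℓ (by omega)]
  exact max_eq_left (foldr_min_le_mem (List.get_mem P i))

lemma label_at_min (hℓ : P.foldr min ℓ ≠ ℓ)
    (hx : P.idxOf (P.foldr min ℓ) < P.length) :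
    lineLabel P ℓ ⟨P.idxOf (P.foldr min ℓ), hx⟩ =
      (P.drop (P.idxOf (P.foldr min ℓ) + 1)).foldr min ℓ := by
  unfold lineLabel
  have h1 : P.get ⟨P.idxOf (P.foldr min ℓ), hx⟩ = P.foldr min ℓ :=
    List.getElem_idxOf hx
  rw [h1]
  refine max_eq_right (le_foldr_min (fun a ha => foldr_min_le_mem (List.mem_of_mem_drop ha))
    (foldr_min_le_init P ℓ))

lemma lineLabel_shift (k : ℕ) (j : ℕ) (h : k + j < P.length)
    (h' : j < (P.drop k).length) :
    lineLabel P ℓ ⟨k + j, h⟩ = lineLabel (P.drop k) ℓ ⟨j, h'⟩ := by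
  unfold lineLabel
  have h1 : P.get ⟨k + j, h⟩ = (P.drop k).get ⟨j, h'⟩ := by
    simp [List.getElem_drop]
  rw [h1, List.drop_drop]
  ring_nf

lemma labels_drop (k : ℕ) :
    (List.ofFn (lineLabel P ℓ)).drop k = List.ofFn (lineLabel (P.drop k) ℓ) := by
  apply List.ext_getElem
  · simp
  · intro j h1 h2
    have hj : j < (P.drop k).length := by simpa using h2
    have hkj : k + j < P.length := by
      rw [List.length_drop] at hj; omega
    rw [List.getElem_drop, List.getElem_ofFn, List.getElem_ofFn]
    exact lineLabel_shift P ℓ k j hkj hj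

lemma labels_take_eq (hℓ : P.foldr min ℓ ≠ ℓ) :
    (List.ofFn (lineLabel P ℓ)).take (P.idxOf (P.foldr min ℓ)) =
      P.take (P.idxOf (P.foldr min ℓ)) := by
  have hx : P.idxOf (P.foldr min ℓ) < P.length :=
    List.idxOf_lt_length_iff.2 ((foldr_min_mem P ℓ).resolve_left hℓ)
  apply List.ext_getElem
  · simp only [List.length_take, List.length_ofFn]
  · intro j h1 h2
    have hj : j < P.idxOf (P.foldr min ℓ) := by
      simp only [List.length_take, List.length_ofFn, lt_min_iff] at h1
      omega
    rw [List.getElem_take, List.getElem_take, List.getElem_ofFn]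
    exact label_of_lt P ℓ hℓ _ hj

lemma first_block (hℓ : P.foldr min ℓ ≠ ℓ) :
    (lineLTS P ℓ (P.foldr min ℓ)).dropLast ++ [P.foldr min ℓ] =
      P.take (P.idxOf (P.foldr min ℓ) + 1) := by
  have hx : P.idxOf (P.foldr min ℓ) < P.length :=
    List.idxOf_lt_length_iff.2 ((foldr_min_mem P ℓ).resolve_left hℓ)
  set x := P.idxOf (P.foldr min ℓ) with hxdef
  have h1 : lineLTS P ℓ (P.foldr min ℓ) = (List.ofFn (lineLabel P ℓ)).take (x + 1) := by
    unfold lineLTS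
    simp [if_neg hℓ, hxdef]
  rw [h1]
  have hlen : ((List.ofFn (lineLabel P ℓ)).take (x + 1)).length = x + 1 := by
    simp; omega
  have h2 : ((List.ofFn (lineLabel P ℓ)).take (x + 1)).dropLast =
      (List.ofFn (lineLabel P ℓ)).take x := by
    rw [List.dropLast_eq_take, hlen]
    simp [List.take_take]
  rw [h2, labels_take_eq P ℓ hℓ]
  have h3 : P[x]'hx = P.foldr min ℓ := List.getElem_idxOf hx
  rw [← List.take_concat_get hx]
  simp [h3, ← hxdef]
lemma take_drop_shift {β : Type*} (L : List β) (k e j : ℕ) :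
    (L.take (k + e)).drop (k + j + 1) = ((L.drop k).take e).drop (j + 1) := by
  rw [List.drop_take, List.drop_take, List.drop_drop]
  have h1 : k + e - (k + j + 1) = e - (j + 1) := by omega
  have h2 : k + (j + 1) = k + j + 1 := by omega
  rw [h1, h2]

lemma lineLTS_eq_of_ne {b : α} (hbm : b ≠ P.foldr min ℓ) :
    lineLTS P ℓ b =
      match (List.finRange P.length).find? (fun i => decide (lineLabel P ℓ i = b)) with
      | some i => ((List.ofFn (lineLabel P ℓ)).take
          (if b = ℓ then P.length else P.idxOf b + 1)).drop ((i : ℕ) + 1)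
      | none => [] := by
  unfold lineLTS
  rw [if_neg hbm]

lemma lineLTS_eq_of_min {b : α} (hbm : b = P.foldr min ℓ) :
    lineLTS P ℓ b = (List.ofFn (lineLabel P ℓ)).take
      (if b = ℓ then P.length else P.idxOf b + 1) := by
  unfold lineLTS
  rw [if_pos hbm]

lemma lineLTS_transfer (hnd : P.Nodup) (hnotin : ℓ ∉ P) (hℓ : P.foldr min ℓ ≠ ℓ) {b : α}
    (hb : b ∈ P.drop (P.idxOf (P.foldr min ℓ) + 1) ∨ b = ℓ) :
    lineLTS P ℓ b = lineLTS (P.drop (P.idxOf (P.foldr min ℓ) + 1)) ℓ b := by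
  have hmem : P.foldr min ℓ ∈ P := (foldr_min_mem P ℓ).resolve_left hℓ
  have hx : P.idxOf (P.foldr min ℓ) < P.length := List.idxOf_lt_length_iff.2 hmem
  set x := P.idxOf (P.foldr min ℓ) with hxdef
  set B := P.drop (x + 1) with hBdef
  have hkn : x + 1 ≤ P.length := hx
  have hnB : B.length = P.length - (x + 1) := by rw [hBdef, List.length_drop]
  have hBsub : ∀ a, a ∈ B → a ∈ P := fun a ha => List.mem_of_mem_drop ha
  -- b ≠ m
  have hbm : b ≠ P.foldr min ℓ := by
    rcases hb with hb | hb
    · intro h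
      have := indexOf_drop hnd hb
      rw [h, ← hxdef] at this
      omega
    · rw [hb]; exact fun h => hℓ h.symm
  -- endIdx relation
  have hbnotl : b ∈ B → b ≠ ℓ := by
    intro h1 h2
    subst h2
    exact hnotin (hBsub _ h1)
  have heP : (if b = ℓ then P.length else P.idxOf b + 1) =
      (x + 1) + (if b = ℓ then B.length else B.idxOf b + 1) := by
    rcases hb with hb | hb
    · rw [if_neg (hbnotl hb), if_neg (hbnotl hb), indexOf_drop hnd hb, ← hBdef]
      omega
    · rw [if_pos hb, if_pos hb, hnB]; omega
  -- label facts
  have hlab_lt : ∀ (i : ℕ) (hi : i < x) (hi' : i < P.length),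
      lineLabel P ℓ ⟨i, hi'⟩ ≠ b := by
    intro i hi hi' h
    have h1 : lineLabel P ℓ ⟨i, hi'⟩ = P.get ⟨i, hi'⟩ := label_of_lt P ℓ hℓ _ hi
    rw [h1] at h
    rcases hb with hb | hb
    · exact getElem_take_ne hnd hb (by omega : i < x + 1) hi' h
    · apply hnotin
      rw [← hb, ← h]
      exact List.getElem_mem hi'
  have hlab_x : lineLabel P ℓ ⟨x, hx⟩ = B.foldr min ℓ := label_at_min P ℓ hℓ hx
  have hlab_shift : ∀ (j : ℕ) (h : x + 1 + j < P.length) (h' : j < B.length),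
      lineLabel P ℓ ⟨x + 1 + j, h⟩ = lineLabel B ℓ ⟨j, h'⟩ := by
    intro j h h'
    exact lineLabel_shift P ℓ (x + 1) j h h'
  rw [lineLTS_eq_of_ne P ℓ hbm]
  by_cases hbm' : b = B.foldr min ℓ
  · -- b is the minimum of the suffix: find? in P finds index x
    have hfind : (List.finRange P.length).find? (fun i => decide (lineLabel P ℓ i = b)) =
        some ⟨x, hx⟩ := by
      apply find?_finRange_eq_some hx
      · simp only [decide_eq_true_eq]
        rw [hlab_x]; exact hbm'.symm
      · intro i hi
        simp only [decide_eq_false_iff_not]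
        exact hlab_lt i hi _
    rw [hfind]
    rw [lineLTS_eq_of_min B ℓ hbm', heP]
    simp only
    rw [List.drop_take, labels_drop P ℓ (x + 1)]
    congr 1
    omega
  · rw [lineLTS_eq_of_ne B ℓ hbm']
    rcases hfb : (List.finRange B.length).find? (fun i => decide (lineLabel B ℓ i = b))
      with _ | j
    · -- none on both sides
      have hfP : (List.finRange P.length).find?
          (fun i => decide (lineLabel P ℓ i = b)) = none := by
        rw [List.find?_eq_none]
        intro i _
        simp only [decide_eq_true_eq]
        rcases lt_trichotomy (i : ℕ) x with h | h | h
        · exact hlab_lt i h i.isLt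
        · intro hc
          apply hbm'
          rw [← hc, ← hlab_x]
          congr 1
          exact Fin.ext h
        · intro hc
          have hj : (i : ℕ) - (x + 1) < B.length := by rw [hnB]; omega
          have h2 : lineLabel P ℓ ⟨x + 1 + ((i:ℕ) - (x+1)), by omega⟩ =
              lineLabel B ℓ ⟨(i:ℕ) - (x+1), hj⟩ := hlab_shift _ _ _
          have h3 : (⟨x + 1 + ((i:ℕ) - (x+1)), by omega⟩ : Fin P.length) = i :=
            Fin.ext (by show x + 1 + ((i:ℕ) - (x+1)) = (i:ℕ); omega)
          rw [h3] at h2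
          have := List.find?_eq_none.1 hfb ⟨(i:ℕ) - (x+1), hj⟩ (List.mem_finRange _)
          simp only [decide_eq_true_eq] at this
          exact this (by rw [← h2, hc])
      rw [hfP]
    · -- some on both sides
      obtain ⟨hpj, hjmin⟩ := find?_finRange_some hfb
      simp only [decide_eq_true_eq] at hpj
      have hjP : x + 1 + (j : ℕ) < P.length := by
        have h5 := j.isLt; omega
      have hfP : (List.finRange P.length).find?
          (fun i => decide (lineLabel P ℓ i = b)) = some ⟨x + 1 + (j : ℕ), hjP⟩ := by
        apply find?_finRange_eq_some hjP
        · simp only [decide_eq_true_eq]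
          rw [hlab_shift (j : ℕ) hjP j.isLt]
          convert hpj
        · intro i hi
          simp only [decide_eq_false_iff_not]
          rcases lt_trichotomy i x with h | h | h
          · exact hlab_lt i h _
          · subst h
            intro hc
            apply hbm'
            rw [← hlab_x]
            convert hc.symm using 2
          · intro hc
            have hj2 : i - (x + 1) < B.length := by rw [hnB]; omega
            have h2 : lineLabel P ℓ ⟨x + 1 + (i - (x+1)), by omega⟩ =
                lineLabel B ℓ ⟨i - (x+1), hj2⟩ := hlab_shift _ _ _
            have h3 : (⟨x + 1 + (i - (x+1)), by omega⟩ : Fin P.length) =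
                ⟨i, lt_trans hi hjP⟩ := Fin.ext (by show x + 1 + (i - (x+1)) = i; omega)
            rw [h3] at h2
            have h4 := hjmin ⟨i - (x+1), hj2⟩
              (by rw [Fin.lt_def]; show i - (x+1) < (j:ℕ); omega)
            simp only [decide_eq_false_iff_not] at h4
            exact h4 (by rw [← h2, hc])
      rw [hfP]
      simp only
      rw [heP, take_drop_shift, labels_drop P ℓ (x + 1)]
end Setup

lemma betaChain_ne_nil (Q : List α) (ℓ : α) (f : ℕ) (b : α) : betaChain Q ℓ f b ≠ [] := by
  cases f with
  | zero => simp [betaChain]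
  | succ f =>
    unfold betaChain
    split <;> simp

lemma betaChain_ell (Q : List α) (ℓ : α) (f : ℕ) : betaChain Q ℓ f ℓ = [ℓ] := by
  cases f with
  | zero => rfl
  | succ f =>
    unfold betaChain
    rw [if_neg]
    exact fun h => absurd (lt_of_lt_of_le h (min_le_right _ _)) (lt_irrefl ℓ)

lemma betaChain_mem {Q : List α} {ℓ : α} {f : ℕ} {b : α} (hb : b ∈ Q ∨ b = ℓ) :
    ∀ c ∈ betaChain Q ℓ f b, c ∈ Q ∨ c = ℓ := by
  induction f generalizing b with
  | zero =>
    intro c hc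
    simp [betaChain] at hc
    exact hc ▸ hb
  | succ f ih =>
    intro c hc
    unfold betaChain at hc
    split at hc
    · rcases List.mem_cons.1 hc with h | h
      · exact h ▸ hb
      · apply ih _ c h
        rcases foldr_min_mem (Q.drop (Q.idxOf b + 1)) ℓ with h' | h'
        · right; exact h'
        · left; exact List.mem_of_mem_drop h'
    · simp at hc
      exact hc ▸ hb

lemma betaChain_fuel {Q : List α} (hnd : Q.Nodup) {ℓ : α} :
    ∀ (f g : ℕ) (b : α), (b ∈ Q ∨ b = ℓ) →
      Q.length - Q.idxOf b ≤ f → Q.length - Q.idxOf b ≤ g →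
      betaChain Q ℓ f b = betaChain Q ℓ g b := by
  intro f
  induction f with
  | zero =>
    intro g b hb hf hg
    have hbq : b ∉ Q := by
      intro h
      have := List.idxOf_lt_length_iff.2 h
      omega
    have hbl : b = ℓ := hb.resolve_left hbq
    subst hbl
    rw [betaChain_ell, betaChain_ell]
  | succ f ih =>
    intro g b hb hf hg
    rcases hb with hb | hb
    swap
    · subst hb; rw [betaChain_ell, betaChain_ell]
    have hbl : Q.idxOf b < Q.length := List.idxOf_lt_length_iff.2 hb
    cases g with
    | zero => omega
    | succ g =>
      unfold betaChain
      by_cases hcond : b < min (Q.getLastD ℓ) ℓ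
      · rw [if_pos hcond, if_pos hcond]
        congr 1
        set b' := (Q.drop (Q.idxOf b + 1)).foldr min ℓ with hb'
        rcases foldr_min_mem (Q.drop (Q.idxOf b + 1)) ℓ with h' | h'
        · rw [← hb'] at h'
          rw [h', betaChain_ell, betaChain_ell]
        · rw [← hb'] at h'
          have h'Q : b' ∈ Q := List.mem_of_mem_drop h'
          have hidx : Q.idxOf b + 1 ≤ Q.idxOf b' := by
            have := indexOf_drop hnd h'
            omega
          exact ih g b' (Or.inl h'Q) (by omega) (by omega)
      · rw [if_neg hcond, if_neg hcond]

lemma getLastD_drop {P : List α} {k : ℕ} (ℓ : α) (hB : P.drop k ≠ []) :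
    P.getLastD ℓ = (P.drop k).getLastD ℓ := by
  conv_lhs => rw [← List.take_append_drop k P]
  rw [List.getLastD_eq_getLast?, List.getLastD_eq_getLast?,
    List.getLast?_append_of_ne_nil _ hB]

lemma betaChain_shift {P : List α} (hnd : P.Nodup) {ℓ : α} {k : ℕ} (hB : P.drop k ≠ []) :
    ∀ (f : ℕ) (b : α), (b ∈ P.drop k ∨ b = ℓ) →
      betaChain P ℓ f b = betaChain (P.drop k) ℓ f b := by
  intro f
  induction f with
  | zero => intro b _; rfl
  | succ f ih =>
    intro b hb
    unfold betaChain
    rw [← getLastD_drop ℓ hB]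
    by_cases hcond : b < min (P.getLastD ℓ) ℓ
    · rw [if_pos hcond, if_pos hcond]
      have hbl : b ≠ ℓ := ne_of_lt (lt_of_lt_of_le hcond (min_le_right _ _))
      have hbk : b ∈ P.drop k := hb.resolve_right hbl
      rw [← drop_indexOf_eq hnd hbk]
      congr 1
      apply ih
      rcases foldr_min_mem (P.drop (P.idxOf b + 1)) ℓ with h' | h'
      · right; exact h'
      · left
        have hge : k ≤ P.idxOf b := by
          have := indexOf_drop hnd hbk; omega
        have h2 : P.drop (P.idxOf b + 1) = (P.drop k).drop (P.idxOf b + 1 - k) := by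
          rw [List.drop_drop]
          congr 1
          omega
        apply List.mem_of_mem_drop (i := P.idxOf b + 1 - k)
        rw [← h2]
        exact h'
    · rw [if_neg hcond, if_neg hcond]

lemma lineLTS_of_min_eq_ell (B : List α) (ℓ : α) (h : B.foldr min ℓ = ℓ) :
    lineLTS B ℓ ℓ = B := by
  rw [lineLTS_eq_of_min B ℓ h.symm, if_pos rfl]
  have hle : ∀ a ∈ B, ℓ ≤ a := fun a ha => h ▸ foldr_min_le_mem ha
  apply List.ext_getElem
  · simp
  · intro j h1 h2
    rw [List.getElem_take, List.getElem_ofFn]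
    show max (B[j]'h2) ((B.drop (j+1)).foldr min ℓ) = B[j]'h2
    have h3 : (B.drop (j + 1)).foldr min ℓ = ℓ :=
      le_antisymm (foldr_min_le_init _ _)
        (le_foldr_min (fun a ha => hle a (List.mem_of_mem_drop ha)) le_rfl)
    rw [h3]
    exact max_eq_left (hle _ (List.getElem_mem h2))

lemma getLastD_of_ne_nil {C : List α} (hC : C ≠ []) (d d' : α) :
    C.getLastD d = C.getLastD d' := by
  rw [List.getLastD_eq_getLast?, List.getLastD_eq_getLast?,
    List.getLast?_eq_getLast hC]
  rfl

lemma stmt_aux : ∀ (N : ℕ) (P : List α) (ℓ : α), P.length ≤ N →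
    P.Nodup → ℓ ∉ P → P ≠ [] → P.foldr min ℓ ≠ ℓ →
    P = ((betaChain P ℓ P.length (P.foldr min ℓ)).dropLast.map
          (fun b => (lineLTS P ℓ b).dropLast ++ [b])).flatten ++
        (let bw := (betaChain P ℓ P.length (P.foldr min ℓ)).getLastD ℓ
         if bw = ℓ then lineLTS P ℓ bw else (lineLTS P ℓ bw).dropLast ++ [bw]) := by
  intro N
  induction N with
  | zero =>
    intro P ℓ hlen _ _ hne _
    exact absurd (List.length_eq_zero_iff.1 (Nat.le_zero.1 hlen)) hne
  | succ N ih =>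
    intro P ℓ hlen hnd hnotin hne hℓ
    have hmem : P.foldr min ℓ ∈ P := (foldr_min_mem P ℓ).resolve_left hℓ
    have hx : P.idxOf (P.foldr min ℓ) < P.length := List.idxOf_lt_length_iff.2 hmem
    have hml : P.foldr min ℓ < ℓ := lt_of_le_of_ne (foldr_min_le_init P ℓ) hℓ
    have hpos : 0 < P.length := List.length_pos_iff.2 hne
    obtain ⟨M, hM⟩ : ∃ M, P.length = M + 1 := ⟨P.length - 1, by omega⟩
    have hunfold : ∀ c : α, betaChain P ℓ P.length c =
        if c < min (P.getLastD ℓ) ℓ then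
          c :: betaChain P ℓ M ((P.drop (P.idxOf c + 1)).foldr min ℓ)
        else [c] := by
      intro c
      rw [hM]
      rfl
    have hlastD : P.getLastD ℓ = P[P.length - 1]'(by omega) := by
      rw [List.getLastD_eq_getLast?, List.getLast?_eq_getLast hne]
      show P.getLast hne = _
      rw [List.getLast_eq_getElem]
    have hlastmem : P.getLastD ℓ ∈ P := by
      rw [hlastD]; exact List.getElem_mem _
    by_cases hcond : P.foldr min ℓ < min (P.getLastD ℓ) ℓ
    · -- chain continues
      have hmlast : P.foldr min ℓ < P.getLastD ℓ :=
        lt_of_lt_of_le hcond (min_le_left _ _)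
      have hxlt : P.idxOf (P.foldr min ℓ) + 1 < P.length := by
        rcases Nat.lt_or_ge (P.idxOf (P.foldr min ℓ) + 1) P.length with h | h
        · exact h
        · exfalso
          have h4 : P[P.length - 1]'(by omega) = P.foldr min ℓ := by
            have h3 : P[P.idxOf (P.foldr min ℓ)]'hx = P.foldr min ℓ :=
              List.getElem_idxOf hx
            rw [← h3]
            congr 1
            omega
          rw [hlastD, h4] at hmlast
          exact lt_irrefl _ hmlast
      set B := P.drop (P.idxOf (P.foldr min ℓ) + 1) with hBdef
      have hBlen : B.length = P.length - (P.idxOf (P.foldr min ℓ) + 1) := by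
        rw [hBdef]; exact List.length_drop
      have hBne : B ≠ [] := by
        rw [← List.length_pos_iff, hBlen]
        omega
      rw [hunfold, if_pos hcond, ← hBdef]
      by_cases hm'ℓ : B.foldr min ℓ = ℓ
      · -- next element is ℓ: chain is [m, ℓ]
        rw [hm'ℓ, betaChain_ell]
        have e1 : ([P.foldr min ℓ, ℓ] : List α).dropLast = [P.foldr min ℓ] := rfl
        have e2 : ([P.foldr min ℓ, ℓ] : List α).getLastD ℓ = ℓ := rfl
        simp only [e1, e2, List.map_cons, List.map_nil, List.flatten_cons,
          List.flatten_nil, List.append_nil, if_true]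
        rw [first_block P ℓ hℓ]
        rw [lineLTS_transfer P ℓ hnd hnotin hℓ (Or.inr rfl), ← hBdef,
          lineLTS_of_min_eq_ell B ℓ hm'ℓ, hBdef]
        rw [List.take_append_drop]
      · -- recursive case
        have hm'B : B.foldr min ℓ ∈ B := (foldr_min_mem B ℓ).resolve_left hm'ℓ
        have hndB : B.Nodup := (List.drop_sublist _ _).nodup hnd
        have hnotinB : ℓ ∉ B := fun h => hnotin (List.mem_of_mem_drop h)
        have hlenB : B.length ≤ N := by omega
        have hidxm' : P.idxOf (B.foldr min ℓ) =
            (P.idxOf (P.foldr min ℓ) + 1) + B.idxOf (B.foldr min ℓ) :=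
          indexOf_drop hnd hm'B
        have hmeasure : P.length - P.idxOf (B.foldr min ℓ) ≤ B.length := by omega
        have hfuel : betaChain P ℓ M (B.foldr min ℓ) =
            betaChain P ℓ B.length (B.foldr min ℓ) := by
          apply betaChain_fuel hnd M B.length (B.foldr min ℓ)
            (Or.inl (List.mem_of_mem_drop hm'B))
          · omega
          · exact hmeasure
        have hshift : betaChain P ℓ B.length (B.foldr min ℓ) =
            betaChain B ℓ B.length (B.foldr min ℓ) :=
          betaChain_shift hnd (hBdef ▸ hBne) B.length (B.foldr min ℓ) (Or.inl hm'B)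
        rw [hfuel, hshift]
        set C := betaChain B ℓ B.length (B.foldr min ℓ) with hCdef
        have hC : C ≠ [] := betaChain_ne_nil B ℓ B.length (B.foldr min ℓ)
        have hCmem : ∀ c ∈ C, c ∈ B ∨ c = ℓ := betaChain_mem (Or.inl hm'B)
        have htrans : ∀ c, (c ∈ B ∨ c = ℓ) → lineLTS P ℓ c = lineLTS B ℓ c :=
          fun c hc => lineLTS_transfer P ℓ hnd hnotin hℓ hc
        have IH := ih B ℓ hlenB hndB hnotinB hBne hm'ℓ
        rw [List.dropLast_cons_of_ne_nil hC, List.map_cons, List.flatten_cons]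
        simp only [List.getLastD_cons]
        rw [first_block P ℓ hℓ]
        have hmap : C.dropLast.map (fun b => (lineLTS P ℓ b).dropLast ++ [b]) =
            C.dropLast.map (fun b => (lineLTS B ℓ b).dropLast ++ [b]) := by
          apply List.map_congr_left
          intro c hc
          rw [htrans c (hCmem c (List.mem_of_mem_dropLast hc))]
        have hgl2 : C.getLastD (P.foldr min ℓ) = C.getLastD ℓ :=
          getLastD_of_ne_nil hC _ _
        have hbwC : C.getLastD ℓ ∈ C := by
          rw [List.getLastD_eq_getLast?, List.getLast?_eq_getLast hC]
          exact List.getLast_mem hC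
        have hltsbw : lineLTS P ℓ (C.getLastD ℓ) = lineLTS B ℓ (C.getLastD ℓ) :=
          htrans _ (hCmem _ hbwC)
        rw [hmap, hgl2, hltsbw, List.append_assoc, ← IH]
        rw [hBdef, List.take_append_drop]
    · -- chain stops immediately: P.foldr min ℓ is the last element
      rw [hunfold, if_neg hcond]
      have e1 : ([P.foldr min ℓ] : List α).dropLast = [] := rfl
      have e2 : ([P.foldr min ℓ] : List α).getLastD ℓ = P.foldr min ℓ := rfl
      simp only [e1, e2, List.map_nil, List.flatten_nil, List.nil_append]
      rw [if_neg hℓ]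
      have hgel : P.getLastD ℓ ≤ P.foldr min ℓ := by
        push_neg at hcond
        rcases le_total (P.getLastD ℓ) ℓ with h | h
        · rw [min_eq_left h] at hcond; exact hcond
        · rw [min_eq_right h] at hcond
          exact absurd hcond (not_le.2 hml)
      have hmeq : P.foldr min ℓ = P[P.length - 1]'(by omega) := by
        refine le_antisymm (foldr_min_le_mem (List.getElem_mem _)) ?_
        rw [← hlastD]
        exact hgel
      have hxe : P.idxOf (P.foldr min ℓ) = P.length - 1 := by
        rw [hmeq]
        exact List.Nodup.idxOf_getElem hnd _ _
      rw [first_block P ℓ hℓ, hxe,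
        show P.length - 1 + 1 = P.length from by omega, List.take_length]
end Stmt11

/-- for a permutation `P` of `Σ`, `ℓ ∉ Σ`, and an ordering of `Σ ∪ {ℓ}`
in which `ℓ` is not the smallest element, with `β₁, …, β_w` the chain defined above and
`S_j` the LTS of `β_j` in `T(P)`, the permutation `P` equals the concatenation
`S₁[1..|S₁|−1]·β₁ ⋯ S_{w−1}[1..|S_{w−1}|−1]·β_{w−1}·S'_w`, where `S'_w = S_w` if
`β_w = ℓ` and `S'_w = S_w[1..|S_w|−1]·β_w` otherwise. -/
theorem stmt_11 {α : Type} [LinearOrder α] (P : List α) (ℓ : α)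
    (hnd : P.Nodup) (hnotin : ℓ ∉ P) (hne : P ≠ [])
    (hℓ : P.foldr min ℓ ≠ ℓ) :
    P =
      ((betaChain P ℓ P.length (P.foldr min ℓ)).dropLast.map
          (fun b => (lineLTS P ℓ b).dropLast ++ [b])).flatten ++
        (let bw := (betaChain P ℓ P.length (P.foldr min ℓ)).getLastD ℓ
         if bw = ℓ then lineLTS P ℓ bw else (lineLTS P ℓ bw).dropLast ++ [bw]) :=
  Stmt11.stmt_aux P.length P ℓ le_rfl hnd hnotin hne hℓ
end
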